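/- arXiv:1401.2646 — 2 statements merged into one kernel-verified Lean document; each statement's English description precedes it below -/
import Mathlib

section
/- Let q(x,ξ) = (1/2) c(x) ξ² + 2 ∫_{(0,∞)} (1 − cos(ξ y)) ν(x,dy) be a one-dimensional symmetric symbol (bounded c ≥ 0, Lévy kernel ν with sup_x ∫ min{1,y²} ν(x,dy) < ∞) satisfying lim_{ξ→0} inf_{x∈ℝ} q(x,ξ)/ξ² = ∞, and set N(x,y) := ν(x,(y,∞)). Fix 0 < a < b < π and r > 0. If either ∫_r^∞ dy / ( y² · inf_{x∈ℝ} [ N(x, b y) − N(x, (a+π) y) ] ) < ∞, or ∫_r^∞ ( inf_{x∈ℝ} ∫_{(0,ξ]} y² ν(x,dy) )^{-1} dξ < ∞, then there exists r' > 0 with ∫_{{|ξ|<r'}} dξ / inf_{x∈ℝ} q(x,ξ) < ∞. -/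
open MeasureTheory Filter Topology
open scoped ENNReal

/-- A one-dimensional symmetric symbol:
`q(x,ξ) = (1/2)c(x)ξ² + 2∫_{(0,∞)} (1 − cos(ξy)) ν(x,dy)`, valued in `[0,∞]`. -/
noncomputable def oneDimSymbol (c : ℝ → ℝ) (ν : ℝ → MeasureTheory.Measure ℝ)
    (x ξ : ℝ) : ℝ≥0∞ :=
  ENNReal.ofReal ((1 / 2) * c x * ξ ^ 2) +
    2 * ∫⁻ y in Set.Ioi (0 : ℝ), ENNReal.ofReal (1 - Real.cos (ξ * y)) ∂(ν x)

/-- 1D change of variables for lower Lebesgue integrals. -/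
theorem my_lintegral_image_eq {s : Set ℝ} {f : ℝ → ℝ} {f' : ℝ → ℝ}
    (hs : MeasurableSet s) (hf' : ∀ x ∈ s, HasDerivWithinAt f (f' x) s x)
    (hf : Set.InjOn f s) (g : ℝ → ℝ≥0∞) :
    ∫⁻ x in f '' s, g x = ∫⁻ x in s, ENNReal.ofReal |f' x| * g (f x) := by
  simpa only [ContinuousLinearMap.det_toSpanSingleton] using
    MeasureTheory.lintegral_image_eq_lintegral_abs_det_fderiv_mul volume hs
      (fun x hx => (hf' x hx).hasFDerivWithinAt) hf g

theorem my_cos_bound {a b t : ℝ} (ha : 0 < a) (hab : a < b) (hbπ : b < Real.pi)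
    (h1 : b < t) (h2 : t ≤ a + Real.pi) :
    Real.cos t ≤ max (Real.cos b) (Real.cos (a + Real.pi)) := by
  rcases le_or_gt t Real.pi with h | h
  · exact le_max_of_le_left (Real.cos_le_cos_of_nonneg_of_le_pi (by linarith) h h1.le)
  · refine le_max_of_le_right ?_
    have e1 : Real.cos t = -Real.cos (t - Real.pi) := by
      rw [← Real.cos_add_pi (t - Real.pi), sub_add_cancel]
    have e2 : Real.cos (a + Real.pi) = -Real.cos a := Real.cos_add_pi a
    rw [e1, e2, neg_le_neg_iff]
    exact Real.cos_le_cos_of_nonneg_of_le_pi (by linarith) (by linarith) (by linarith)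

/-- two sufficient conditions for transience in terms of the Lévy kernel.
Note that `N(x,by) − N(x,(a+π)y) = ν(x,(by,(a+π)y])`. -/
theorem stmt17 (c : ℝ → ℝ) (ν : ℝ → MeasureTheory.Measure ℝ)
    (a b r : ℝ) (ha : 0 < a) (hab : a < b) (hbπ : b < Real.pi) (hr : 0 < r)
    (hc : ∀ x, 0 ≤ c x) (hcb : ∃ K : ℝ, ∀ x, c x ≤ K)
    (hν : (⨆ x, ∫⁻ y in Set.Ioi (0 : ℝ), ENNReal.ofReal (min 1 (y ^ 2)) ∂(ν x)) < ∞)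
    (hlim : Tendsto (fun ξ : ℝ => (⨅ x, oneDimSymbol c ν x ξ) / ENNReal.ofReal (ξ ^ 2))
      (𝓝[≠] (0 : ℝ)) (𝓝 ∞))
    (hmi : Measurable fun ξ : ℝ => ⨅ x, oneDimSymbol c ν x ξ)
    (hmN : Measurable fun y : ℝ => ⨅ x, ν x (Set.Ioc (b * y) ((a + Real.pi) * y)))
    (hmM : Measurable fun ξ : ℝ => ⨅ x, ∫⁻ y in Set.Ioc (0 : ℝ) ξ,
      ENNReal.ofReal (y ^ 2) ∂(ν x))
    (hcond :
      (∫⁻ y in Set.Ioi r,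
        (ENNReal.ofReal (y ^ 2) * ⨅ x, ν x (Set.Ioc (b * y) ((a + Real.pi) * y)))⁻¹ < ∞) ∨
      (∫⁻ ξ in Set.Ioi r,
        (⨅ x, ∫⁻ y in Set.Ioc (0 : ℝ) ξ, ENNReal.ofReal (y ^ 2) ∂(ν x))⁻¹ < ∞)) :
    ∃ r' > (0 : ℝ), ∫⁻ ξ in Metric.ball (0 : ℝ) r',
      (⨅ x, oneDimSymbol c ν x ξ)⁻¹ < ∞ := by
  have hπ := Real.pi_pos
  set I : ℝ → ℝ≥0∞ := fun ξ => ⨅ x, oneDimSymbol c ν x ξ with hIdef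
  -- evenness
  have hIeven : ∀ ξ : ℝ, I (-ξ) = I ξ := by
    intro ξ
    refine iInf_congr fun x => ?_
    unfold oneDimSymbol
    simp only [neg_sq, neg_mul, Real.cos_neg]
  refine ⟨r⁻¹, by positivity, ?_⟩
  -- split the ball
  have hball : Metric.ball (0 : ℝ) r⁻¹ ⊆ Set.Ioo (-r⁻¹) 0 ∪ Set.Ico 0 r⁻¹ := by
    intro x hx
    rw [Real.ball_eq_Ioo, zero_sub, zero_add] at hx
    rcases lt_or_ge x 0 with h | h
    · exact Or.inl ⟨hx.1, h⟩
    · exact Or.inr ⟨h, hx.2⟩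
  have hIco : ∫⁻ ξ in Set.Ico (0:ℝ) r⁻¹, (I ξ)⁻¹ = ∫⁻ ξ in Set.Ioo (0:ℝ) r⁻¹, (I ξ)⁻¹ :=
    (setLIntegral_congr (Ioo_ae_eq_Ico (μ := (volume : Measure ℝ)) (a := (0:ℝ)) (b := r⁻¹))).symm
  have hneg : ∫⁻ ξ in Set.Ioo (-r⁻¹) (0:ℝ), (I ξ)⁻¹ = ∫⁻ ξ in Set.Ioo (0:ℝ) r⁻¹, (I ξ)⁻¹ := by
    have h1 := (Measure.measurePreserving_neg (volume : Measure ℝ)).setLIntegral_comp_preimage_emb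
      (MeasurableEquiv.neg ℝ).measurableEmbedding (fun ξ => (I ξ)⁻¹) (Set.Ioo (-r⁻¹) 0)
    have hpre : (Neg.neg : ℝ → ℝ) ⁻¹' Set.Ioo (-r⁻¹) 0 = Set.Ioo (0:ℝ) r⁻¹ := by
      ext x; simp only [Set.mem_preimage, Set.mem_Ioo]
      constructor
      · rintro ⟨h1, h2⟩; constructor <;> linarith
      · rintro ⟨h1, h2⟩; constructor <;> linarith
    rw [hpre] at h1
    rw [← h1]
    refine setLIntegral_congr_fun measurableSet_Ioo (fun ξ _ => ?_)
    rw [hIeven]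
  have hsplit : ∫⁻ ξ in Metric.ball (0 : ℝ) r⁻¹, (I ξ)⁻¹ ≤
      2 * ∫⁻ ξ in Set.Ioo (0:ℝ) r⁻¹, (I ξ)⁻¹ := by
    calc ∫⁻ ξ in Metric.ball (0 : ℝ) r⁻¹, (I ξ)⁻¹
        ≤ ∫⁻ ξ in Set.Ioo (-r⁻¹) 0 ∪ Set.Ico 0 r⁻¹, (I ξ)⁻¹ := lintegral_mono_set hball
      _ ≤ (∫⁻ ξ in Set.Ioo (-r⁻¹) 0, (I ξ)⁻¹) + ∫⁻ ξ in Set.Ico 0 r⁻¹, (I ξ)⁻¹ :=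
          lintegral_union_le _ _ _
      _ = 2 * ∫⁻ ξ in Set.Ioo (0:ℝ) r⁻¹, (I ξ)⁻¹ := by rw [hneg, hIco, two_mul]
  -- change of variables
  have himg : (fun y : ℝ => y⁻¹) '' Set.Ioi r = Set.Ioo (0:ℝ) r⁻¹ := by
    ext x
    constructor
    · rintro ⟨y, hy, rfl⟩
      have hy0 : 0 < y := hr.trans hy
      exact ⟨inv_pos.2 hy0, (inv_lt_inv₀ hy0 hr).2 hy⟩
    · rintro ⟨h0, h1⟩
      refine ⟨x⁻¹, ?_, inv_inv x⟩
      have := (inv_lt_inv₀ (inv_pos.2 (by positivity)) h0).2 h1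
      rwa [inv_inv] at this
  have hderiv : ∀ y ∈ Set.Ioi r, HasDerivWithinAt (fun y : ℝ => y⁻¹) (-(y^2)⁻¹) (Set.Ioi r) y :=
    fun y hy => (hasDerivAt_inv (ne_of_gt (hr.trans hy))).hasDerivWithinAt
  have hinj : Set.InjOn (fun y : ℝ => y⁻¹) (Set.Ioi r) := fun x _ y _ h => inv_injective h
  have hCoV : ∫⁻ ξ in Set.Ioo (0:ℝ) r⁻¹, (I ξ)⁻¹ =
      ∫⁻ y in Set.Ioi r, ENNReal.ofReal |(-(y^2)⁻¹)| * (I y⁻¹)⁻¹ := by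
    rw [← himg]
    exact my_lintegral_image_eq measurableSet_Ioi hderiv hinj _
  have habs : ∀ y : ℝ, r < y → ENNReal.ofReal |(-(y^2)⁻¹)| = (ENNReal.ofReal (y^2))⁻¹ := by
    intro y hy
    have hy0 : 0 < y := hr.trans hy
    have hsq : (0:ℝ) < y^2 := pow_pos hy0 2
    rw [abs_neg, abs_of_pos (inv_pos.2 hsq), ENNReal.ofReal_inv_of_pos hsq]
  -- it suffices to bound the Ioo-integral
  refine lt_of_le_of_lt hsplit (ENNReal.mul_lt_top (by norm_num) ?_)
  rw [hCoV]
  rcases hcond with hcase | hcase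
  · -- Case 1
    set δ : ℝ := 1 - max (Real.cos b) (Real.cos (a + Real.pi)) with hδdef
    have hδ : 0 < δ := by
      have h1 : Real.cos b < 1 := by
        have := Real.cos_lt_cos_of_nonneg_of_le_pi (le_refl (0:ℝ)) hbπ.le (by linarith)
        rwa [Real.cos_zero] at this
      have h2 : Real.cos (a + Real.pi) < 1 := by
        have hc1 : Real.cos Real.pi < Real.cos a :=
          Real.cos_lt_cos_of_nonneg_of_le_pi ha.le (le_refl _) (by linarith)
        rw [Real.cos_pi] at hc1
        rw [Real.cos_add_pi]
        linarith
      have := max_lt h1 h2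
      simp only [hδdef]
      linarith [this]
    have claim1 : ∀ ξ : ℝ, 0 < ξ →
        ENNReal.ofReal (2*δ) * (⨅ x, ν x (Set.Ioc (b * ξ⁻¹) ((a + Real.pi) * ξ⁻¹))) ≤ I ξ := by
      intro ξ hξ
      refine le_iInf fun x => ?_
      have hsubset : Set.Ioc (b * ξ⁻¹) ((a + Real.pi) * ξ⁻¹) ⊆ Set.Ioi (0:ℝ) :=
        fun y hy => lt_trans (mul_pos (ha.trans hab) (inv_pos.2 hξ)) hy.1
      have hpoint : ∀ y ∈ Set.Ioc (b * ξ⁻¹) ((a + Real.pi) * ξ⁻¹),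
          ENNReal.ofReal δ ≤ ENNReal.ofReal (1 - Real.cos (ξ * y)) := by
        intro y hy
        have hb : b < ξ * y := by
          have := hy.1
          rw [mul_comm b ξ⁻¹, ← div_eq_inv_mul, div_lt_iff₀ hξ] at this
          nlinarith [this]
        have haπ : ξ * y ≤ a + Real.pi := by
          have := hy.2
          rw [mul_comm _ ξ⁻¹, ← div_eq_inv_mul, le_div_iff₀ hξ] at this
          nlinarith [this]
        refine ENNReal.ofReal_le_ofReal ?_
        have := my_cos_bound ha hab hbπ hb haπ
        simp only [hδdef]
        linarith
      calc ENNReal.ofReal (2*δ) * (⨅ x', ν x' (Set.Ioc (b * ξ⁻¹) ((a + Real.pi) * ξ⁻¹)))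
          ≤ ENNReal.ofReal (2*δ) * ν x (Set.Ioc (b * ξ⁻¹) ((a + Real.pi) * ξ⁻¹)) :=
            mul_le_mul_right (iInf_le _ x) _
        _ = 2 * (ENNReal.ofReal δ * ν x (Set.Ioc (b * ξ⁻¹) ((a + Real.pi) * ξ⁻¹))) := by
            rw [ENNReal.ofReal_mul (by norm_num : (0:ℝ) ≤ 2), ENNReal.ofReal_ofNat, mul_assoc]
        _ ≤ 2 * ∫⁻ y in Set.Ioc (b * ξ⁻¹) ((a + Real.pi) * ξ⁻¹),
              ENNReal.ofReal (1 - Real.cos (ξ * y)) ∂(ν x) := by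
            refine mul_le_mul_right ?_ 2
            rw [← setLIntegral_const]
            exact lintegral_mono_ae ((ae_restrict_iff' measurableSet_Ioc).2
              (ae_of_all _ hpoint))
        _ ≤ 2 * ∫⁻ y in Set.Ioi (0:ℝ), ENNReal.ofReal (1 - Real.cos (ξ * y)) ∂(ν x) :=
            mul_le_mul_right (lintegral_mono_set hsubset) 2
        _ ≤ oneDimSymbol c ν x ξ := self_le_add_left _ _
    have hC0 : ENNReal.ofReal (2*δ) ≠ 0 := by
      simp only [ne_eq, ENNReal.ofReal_eq_zero, not_le]; linarith
    have hCt : ENNReal.ofReal (2*δ) ≠ ⊤ := ENNReal.ofReal_ne_top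
    have hbd : ∀ y ∈ Set.Ioi r, ENNReal.ofReal |(-(y^2)⁻¹)| * (I y⁻¹)⁻¹ ≤
        (ENNReal.ofReal (2*δ))⁻¹ *
          (ENNReal.ofReal (y ^ 2) * ⨅ x, ν x (Set.Ioc (b * y) ((a + Real.pi) * y)))⁻¹ := by
      intro y hy
      have hy0 : 0 < y := hr.trans hy
      have hkey := claim1 y⁻¹ (by positivity)
      rw [inv_inv] at hkey
      have h2 : (I y⁻¹)⁻¹ ≤ (ENNReal.ofReal (2*δ) *
          ⨅ x, ν x (Set.Ioc (b * y) ((a + Real.pi) * y)))⁻¹ := ENNReal.inv_le_inv.2 hkey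
      rw [habs y hy]
      calc (ENNReal.ofReal (y^2))⁻¹ * (I y⁻¹)⁻¹
          ≤ (ENNReal.ofReal (y^2))⁻¹ * (ENNReal.ofReal (2*δ) *
              ⨅ x, ν x (Set.Ioc (b * y) ((a + Real.pi) * y)))⁻¹ := mul_le_mul_right h2 _
        _ = (ENNReal.ofReal (2*δ))⁻¹ *
              (ENNReal.ofReal (y ^ 2) * ⨅ x, ν x (Set.Ioc (b * y) ((a + Real.pi) * y)))⁻¹ := by
            have hy20 : ENNReal.ofReal (y^2) ≠ 0 := by
              rw [ne_eq, ENNReal.ofReal_eq_zero, not_le]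
              exact pow_pos hy0 2
            rw [ENNReal.mul_inv (Or.inl hC0) (Or.inl hCt),
              ENNReal.mul_inv (Or.inl hy20) (Or.inl ENNReal.ofReal_ne_top)]
            ring
    calc ∫⁻ y in Set.Ioi r, ENNReal.ofReal |(-(y^2)⁻¹)| * (I y⁻¹)⁻¹
        ≤ ∫⁻ y in Set.Ioi r, (ENNReal.ofReal (2*δ))⁻¹ *
            (ENNReal.ofReal (y ^ 2) * ⨅ x, ν x (Set.Ioc (b * y) ((a + Real.pi) * y)))⁻¹ :=
          lintegral_mono_ae ((ae_restrict_iff' measurableSet_Ioi).2 (ae_of_all _ hbd))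
      _ = (ENNReal.ofReal (2*δ))⁻¹ * ∫⁻ y in Set.Ioi r,
            (ENNReal.ofReal (y ^ 2) * ⨅ x, ν x (Set.Ioc (b * y) ((a + Real.pi) * y)))⁻¹ :=
          lintegral_const_mul' _ _ (ENNReal.inv_ne_top.2 hC0)
      _ < ∞ := ENNReal.mul_lt_top (ENNReal.inv_lt_top.2 (by
            simp only [ENNReal.ofReal_pos]; positivity)) hcase
  · -- Case 2
    have claim2 : ∀ ξ : ℝ, 0 < ξ →
        ENNReal.ofReal (4/Real.pi^2 * ξ^2) *
          (⨅ x, ∫⁻ y in Set.Ioc (0:ℝ) ξ⁻¹, ENNReal.ofReal (y^2) ∂(ν x)) ≤ I ξ := by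
      intro ξ hξ
      refine le_iInf fun x => ?_
      have hpoint : ∀ y ∈ Set.Ioc (0:ℝ) ξ⁻¹,
          ENNReal.ofReal ((2/Real.pi^2 * ξ^2) * y^2) ≤
            ENNReal.ofReal (1 - Real.cos (ξ * y)) := by
        intro y hy
        have hy0 : 0 < y := hy.1
        have hty : ξ * y ≤ 1 := by
          nlinarith [mul_inv_cancel₀ (ne_of_gt hξ), hy.2, hξ]
        have habsle : |ξ * y| ≤ Real.pi := by
          rw [abs_of_pos (by positivity)]
          linarith [Real.pi_gt_three]
        have hcos := Real.cos_le_one_sub_mul_cos_sq habsle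
        refine ENNReal.ofReal_le_ofReal ?_
        nlinarith [hcos]
      have hsubset : Set.Ioc (0:ℝ) ξ⁻¹ ⊆ Set.Ioi (0:ℝ) := fun y hy => hy.1
      calc ENNReal.ofReal (4/Real.pi^2 * ξ^2) *
            (⨅ x', ∫⁻ y in Set.Ioc (0:ℝ) ξ⁻¹, ENNReal.ofReal (y^2) ∂(ν x'))
          ≤ ENNReal.ofReal (4/Real.pi^2 * ξ^2) *
            ∫⁻ y in Set.Ioc (0:ℝ) ξ⁻¹, ENNReal.ofReal (y^2) ∂(ν x) :=
            mul_le_mul_right (iInf_le _ x) _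
        _ = 2 * ∫⁻ y in Set.Ioc (0:ℝ) ξ⁻¹,
              ENNReal.ofReal ((2/Real.pi^2 * ξ^2) * y^2) ∂(ν x) := by
            rw [show (4/Real.pi^2*ξ^2 : ℝ) = 2 * (2/Real.pi^2*ξ^2) by ring,
              ENNReal.ofReal_mul (by norm_num : (0:ℝ) ≤ 2), ENNReal.ofReal_ofNat, mul_assoc]
            congr 1
            rw [← lintegral_const_mul' _ _ ENNReal.ofReal_ne_top]
            refine lintegral_congr fun y => ?_
            rw [← ENNReal.ofReal_mul (by positivity)]
        _ ≤ 2 * ∫⁻ y in Set.Ioc (0:ℝ) ξ⁻¹,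
              ENNReal.ofReal (1 - Real.cos (ξ * y)) ∂(ν x) :=
            mul_le_mul_right (lintegral_mono_ae ((ae_restrict_iff' measurableSet_Ioc).2
              (ae_of_all _ hpoint))) 2
        _ ≤ 2 * ∫⁻ y in Set.Ioi (0:ℝ), ENNReal.ofReal (1 - Real.cos (ξ * y)) ∂(ν x) :=
            mul_le_mul_right (lintegral_mono_set hsubset) 2
        _ ≤ oneDimSymbol c ν x ξ := self_le_add_left _ _
    have hK0 : ENNReal.ofReal (4/Real.pi^2) ≠ 0 := by
      rw [ne_eq, ENNReal.ofReal_eq_zero, not_le]; positivity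
    have hbd : ∀ y ∈ Set.Ioi r, ENNReal.ofReal |(-(y^2)⁻¹)| * (I y⁻¹)⁻¹ ≤
        (ENNReal.ofReal (4/Real.pi^2))⁻¹ *
          (⨅ x, ∫⁻ y' in Set.Ioc (0:ℝ) y, ENNReal.ofReal (y'^2) ∂(ν x))⁻¹ := by
      intro y hy
      have hy0 : 0 < y := hr.trans hy
      have hkey := claim2 y⁻¹ (by positivity)
      rw [inv_inv] at hkey
      have h2 : (I y⁻¹)⁻¹ ≤ (ENNReal.ofReal (4/Real.pi^2*(y⁻¹)^2) *
          ⨅ x, ∫⁻ y' in Set.Ioc (0:ℝ) y, ENNReal.ofReal (y'^2) ∂(ν x))⁻¹ :=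
        ENNReal.inv_le_inv.2 hkey
      rw [habs y hy]
      have hA0 : ENNReal.ofReal (4/Real.pi^2*(y⁻¹)^2) ≠ 0 := by
        rw [ne_eq, ENNReal.ofReal_eq_zero, not_le]; positivity
      have hy20 : ENNReal.ofReal (y^2) ≠ 0 := by
        rw [ne_eq, ENNReal.ofReal_eq_zero, not_le]
        exact pow_pos hy0 2
      calc (ENNReal.ofReal (y^2))⁻¹ * (I y⁻¹)⁻¹
          ≤ (ENNReal.ofReal (y^2))⁻¹ * (ENNReal.ofReal (4/Real.pi^2*(y⁻¹)^2) *
              ⨅ x, ∫⁻ y' in Set.Ioc (0:ℝ) y, ENNReal.ofReal (y'^2) ∂(ν x))⁻¹ :=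
            mul_le_mul_right h2 _
        _ = (ENNReal.ofReal (4/Real.pi^2))⁻¹ *
              (⨅ x, ∫⁻ y' in Set.Ioc (0:ℝ) y, ENNReal.ofReal (y'^2) ∂(ν x))⁻¹ := by
            rw [ENNReal.mul_inv (Or.inl hA0) (Or.inl ENNReal.ofReal_ne_top), ← mul_assoc,
              ← ENNReal.mul_inv (Or.inl hy20) (Or.inl ENNReal.ofReal_ne_top),
              ← ENNReal.ofReal_mul (by positivity)]
            congr 3
            field_simp
    calc ∫⁻ y in Set.Ioi r, ENNReal.ofReal |(-(y^2)⁻¹)| * (I y⁻¹)⁻¹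
        ≤ ∫⁻ y in Set.Ioi r, (ENNReal.ofReal (4/Real.pi^2))⁻¹ *
            (⨅ x, ∫⁻ y' in Set.Ioc (0:ℝ) y, ENNReal.ofReal (y'^2) ∂(ν x))⁻¹ :=
          lintegral_mono_ae ((ae_restrict_iff' measurableSet_Ioi).2 (ae_of_all _ hbd))
      _ = (ENNReal.ofReal (4/Real.pi^2))⁻¹ * ∫⁻ y in Set.Ioi r,
            (⨅ x, ∫⁻ y' in Set.Ioc (0:ℝ) y, ENNReal.ofReal (y'^2) ∂(ν x))⁻¹ :=
          lintegral_const_mul' _ _ (ENNReal.inv_ne_top.2 hK0)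
      _ < ∞ := ENNReal.mul_lt_top (ENNReal.inv_lt_top.2 (by
            simp only [ENNReal.ofReal_pos]; positivity)) hcase
end

section
/- Let ν_1, ν_2 be kernels assigning to each x ∈ ℝ Borel measures on (0,∞) with sup_x ∫ min{1,y²} ν_i(x,dy) < ∞ for i = 1,2, and set N_i(x,y) := ν_i(x,(y,∞)). Assume N_1 has a uniformly bigger tail than N_2: there exists y₀ > 0 such that N_1(x,y) ≥ N_2(x,y) for all x ∈ ℝ and all y ≥ y₀. Then: (a) for every ρ > 0, ∫_ρ^∞ ( sup_{x∈ℝ} ∫_0^r y N_1(x,y) dy )^{-1} dr = ∞ implies ∫_ρ^∞ ( sup_{x∈ℝ} ∫_0^r y N_2(x,y) dy )^{-1} dr = ∞; (b) if in addition there exists y₁ > 0 with inf_{x∈ℝ} ∫_{y₁}^∞ y N_1(x,y) dy > 0, then ∫_ρ^∞ ( inf_{x∈ℝ} ∫_0^r y N_2(x,y) dy )^{-1} dr < ∞ for some ρ > 0 implies ∫_ρ^∞ ( inf_{x∈ℝ} ∫_0^r y N_1(x,y) dy )^{-1} dr < ∞ for all sufficiently large ρ > 0. -/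
open MeasureTheory Filter Topology
open scoped ENNReal

/-- σ-finiteness of a measure restricted to `(0,∞)` when all tails are finite. -/
lemma sf_aux (μ : Measure ℝ) (h : ∀ a : ℝ, 0 < a → μ (Set.Ioi a) < ∞) :
    SigmaFinite (μ.restrict (Set.Ioi 0)) := by
  refine ⟨⟨⟨fun n => Set.Iic 0 ∪ Set.Ioi (1/(n+1) : ℝ), fun _ => trivial, fun n => ?_, ?_⟩⟩⟩
  · have h1 : (0:ℝ) < 1/(n+1) := by positivity
    calc μ.restrict (Set.Ioi 0) (Set.Iic 0 ∪ Set.Ioi (1/(n+1):ℝ))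
        ≤ μ.restrict (Set.Ioi 0) (Set.Iic 0) + μ.restrict (Set.Ioi 0) (Set.Ioi (1/(n+1):ℝ)) :=
          measure_union_le _ _
      _ < ∞ := by
          rw [Measure.restrict_apply measurableSet_Iic, Measure.restrict_apply measurableSet_Ioi]
          have e1 : Set.Iic (0:ℝ) ∩ Set.Ioi 0 = ∅ := by
            ext x; simp only [Set.mem_inter_iff, Set.mem_Iic, Set.mem_Ioi, Set.mem_empty_iff_false,
              iff_false, not_and, not_lt]
            exact fun hx => hx
          have e2 : Set.Ioi (1/(n+1):ℝ) ∩ Set.Ioi 0 = Set.Ioi (1/(n+1):ℝ) :=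
            Set.inter_eq_self_of_subset_left (Set.Ioi_subset_Ioi h1.le)
          rw [e1, e2, measure_empty, zero_add]
          exact h _ h1
  · ext x
    simp only [Set.mem_iUnion, Set.mem_union, Set.mem_Iic, Set.mem_Ioi, Set.mem_univ, iff_true]
    rcases le_or_gt x 0 with hx | hx
    · exact ⟨0, Or.inl hx⟩
    · obtain ⟨n, hn⟩ := exists_nat_one_div_lt hx
      exact ⟨n, Or.inr hn⟩

/-- Tails are finite under the integrability condition. -/
lemma tail_fin (μ : Measure ℝ)
    (hfin : ∫⁻ z in Set.Ioi (0:ℝ), ENNReal.ofReal (min 1 (z^2)) ∂μ ≠ ∞)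
    (a : ℝ) (ha : 0 < a) : μ (Set.Ioi a) < ∞ := by
  have hb : ENNReal.ofReal (min 1 (a^2)) * μ (Set.Ioi a)
      ≤ ∫⁻ z in Set.Ioi (0:ℝ), ENNReal.ofReal (min 1 (z^2)) ∂μ := by
    have h1 : ∫⁻ _ in Set.Ioi a, ENNReal.ofReal (min 1 (a^2)) ∂μ
        ≤ ∫⁻ z in Set.Ioi a, ENNReal.ofReal (min 1 (z^2)) ∂μ := by
      refine setLIntegral_mono' measurableSet_Ioi fun z hz => ?_
      have : min 1 (a^2) ≤ min 1 (z^2) := by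
        rcases Set.mem_Ioi.mp hz with hz'
        have : a^2 ≤ z^2 := by nlinarith
        exact min_le_min le_rfl this
      exact ENNReal.ofReal_le_ofReal this
    rw [setLIntegral_const] at h1
    exact h1.trans (lintegral_mono_set (Set.Ioi_subset_Ioi ha.le))
  have hne : ENNReal.ofReal (min 1 (a^2)) ≠ 0 := by
    rw [Ne, ENNReal.ofReal_eq_zero, not_le]
    have : (0:ℝ) < a^2 := by positivity
    exact lt_min one_pos this
  by_contra hc
  rw [not_lt, top_le_iff] at hc
  rw [hc, ENNReal.mul_top hne] at hb
  exact hfin (top_le_iff.mp hb)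

/-- Key bound: `∫_{(0,r]} y μ(Ioi y) dy ≤ max(1,r²) ∫_{(0,∞)} min(1,z²) μ(dz)`. -/
lemma key_bound (μ : Measure ℝ) (r : ℝ) (hr : 0 < r)
    (hfin : ∫⁻ z in Set.Ioi (0:ℝ), ENNReal.ofReal (min 1 (z^2)) ∂μ ≠ ∞) :
    ∫⁻ y in Set.Ioc (0:ℝ) r, ENNReal.ofReal y * μ (Set.Ioi y) ≤
      ENNReal.ofReal (max 1 (r^2)) * ∫⁻ z in Set.Ioi (0:ℝ), ENNReal.ofReal (min 1 (z^2)) ∂μ := by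
  haveI : SigmaFinite (μ.restrict (Set.Ioi 0)) := sf_aux μ (tail_fin μ hfin)
  set μ' := μ.restrict (Set.Ioi 0) with hμ'
  have hres : ∀ y : ℝ, 0 < y → μ (Set.Ioi y) = μ' (Set.Ioi y) := by
    intro y hy
    rw [hμ', Measure.restrict_apply measurableSet_Ioi,
      Set.inter_eq_self_of_subset_left (Set.Ioi_subset_Ioi hy.le)]
  have step1 : ∫⁻ y in Set.Ioc (0:ℝ) r, ENNReal.ofReal y * μ (Set.Ioi y)
      = ∫⁻ y in Set.Ioc (0:ℝ) r, ∫⁻ z, (if y < z then ENNReal.ofReal y else 0) ∂μ' := by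
    refine setLIntegral_congr_fun measurableSet_Ioc (fun y hy => ?_)
    have : ∫⁻ z, (if y < z then ENNReal.ofReal y else 0) ∂μ'
        = ∫⁻ z, (Set.Ioi y).indicator (fun _ => ENNReal.ofReal y) z ∂μ' := by
      congr 1
    rw [this, lintegral_indicator measurableSet_Ioi, setLIntegral_const, hres y hy.1]
  rw [step1]
  have hmeas : AEMeasurable (Function.uncurry fun (y z : ℝ) => if y < z then ENNReal.ofReal y else 0)
      ((volume.restrict (Set.Ioc (0:ℝ) r)).prod μ') := by
    refine Measurable.aemeasurable ?_
    refine Measurable.ite (measurableSet_lt measurable_fst measurable_snd) ?_ measurable_const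
    exact ENNReal.measurable_ofReal.comp measurable_fst
  have step2 := lintegral_lintegral_swap hmeas
  rw [step2]
  have step3 : ∀ z : ℝ, 0 < z →
      (∫⁻ y in Set.Ioc (0:ℝ) r, (if y < z then ENNReal.ofReal y else 0))
        ≤ ENNReal.ofReal (max 1 (r^2)) * ENNReal.ofReal (min 1 (z^2)) := by
    intro z hz
    set m := min r z with hm
    have hm0 : 0 < m := lt_min hr hz
    have hb : ∀ y ∈ Set.Ioc (0:ℝ) r, (if y < z then ENNReal.ofReal y else 0)
        ≤ (Set.Ioc (0:ℝ) m).indicator (fun _ => ENNReal.ofReal m) y := by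
      intro y hy
      by_cases hyz : y < z
      · rw [if_pos hyz]
        have hym : y ≤ m := le_min hy.2 hyz.le
        rw [Set.indicator_of_mem (Set.mem_Ioc.mpr ⟨hy.1, hym⟩)]
        exact ENNReal.ofReal_le_ofReal hym
      · rw [if_neg hyz]; exact zero_le
    calc (∫⁻ y in Set.Ioc (0:ℝ) r, (if y < z then ENNReal.ofReal y else 0))
        ≤ ∫⁻ y in Set.Ioc (0:ℝ) r,
            (Set.Ioc (0:ℝ) m).indicator (fun _ => ENNReal.ofReal m) y :=
          setLIntegral_mono' measurableSet_Ioc hb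
      _ ≤ ∫⁻ y, (Set.Ioc (0:ℝ) m).indicator (fun _ => ENNReal.ofReal m) y :=
          setLIntegral_le_lintegral _ _
      _ = ENNReal.ofReal m * volume (Set.Ioc (0:ℝ) m) := by
          rw [lintegral_indicator measurableSet_Ioc, setLIntegral_const]
      _ = ENNReal.ofReal m * ENNReal.ofReal m := by rw [Real.volume_Ioc, sub_zero]
      _ = ENNReal.ofReal (m * m) := (ENNReal.ofReal_mul hm0.le).symm
      _ ≤ ENNReal.ofReal (max 1 (r^2) * min 1 (z^2)) := by
          apply ENNReal.ofReal_le_ofReal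
          have h1 : (1:ℝ) ≤ max 1 (r^2) := le_max_left _ _
          rcases le_or_gt z 1 with hz1 | hz1
          · have : min 1 (z^2) = z^2 := min_eq_right (by nlinarith)
            rw [this]
            have hmz : m ≤ z := min_le_right _ _
            nlinarith [min_le_right r z, min_le_left r z]
          · have : min 1 (z^2) = 1 := min_eq_left (by nlinarith)
            rw [this, mul_one]
            have hmr : m ≤ r := min_le_left _ _
            have : m * m ≤ r^2 := by nlinarith
            exact this.trans (le_max_right _ _)
      _ = ENNReal.ofReal (max 1 (r^2)) * ENNReal.ofReal (min 1 (z^2)) :=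
          ENNReal.ofReal_mul (le_trans zero_le_one (le_max_left _ _))
  calc ∫⁻ z, (∫⁻ y in Set.Ioc (0:ℝ) r, (if y < z then ENNReal.ofReal y else 0)) ∂μ'
      ≤ ∫⁻ z in Set.Ioi (0:ℝ),
          ENNReal.ofReal (max 1 (r^2)) * ENNReal.ofReal (min 1 (z^2)) ∂μ :=
        setLIntegral_mono' measurableSet_Ioi fun z hz => step3 z hz
    _ = ENNReal.ofReal (max 1 (r^2)) * ∫⁻ z in Set.Ioi (0:ℝ), ENNReal.ofReal (min 1 (z^2)) ∂μ :=
        lintegral_const_mul' _ _ ENNReal.ofReal_ne_top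

/-- Zero propagation: if `∫_{(0,r]} y μ(Ioi y) dy = 0` for some `r > 0` then all tails vanish. -/
lemma zero_prop (μ : Measure ℝ) (r : ℝ) (hr : 0 < r)
    (h : ∫⁻ y in Set.Ioc (0:ℝ) r, ENNReal.ofReal y * μ (Set.Ioi y) = 0) :
    ∀ y : ℝ, 0 < y → μ (Set.Ioi y) = 0 := by
  have hanti : Antitone fun y : ℝ => μ (Set.Ioi y) :=
    fun a b hab => measure_mono (Set.Ioi_subset_Ioi hab)
  have hmeas : Measurable fun y : ℝ => ENNReal.ofReal y * μ (Set.Ioi y) :=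
    ENNReal.measurable_ofReal.comp measurable_id |>.mul hanti.measurable
  have hae : ∀ᵐ y ∂(volume.restrict (Set.Ioc (0:ℝ) r)),
      ENNReal.ofReal y * μ (Set.Ioi y) = 0 := by
    have := (lintegral_eq_zero_iff hmeas).mp h
    filter_upwards [this] with y hy using hy
  rw [ae_restrict_iff' measurableSet_Ioc] at hae
  intro y' hy'
  set t := min y' r with ht
  have ht0 : 0 < t := lt_min hy' hr
  have hex : ∃ y ∈ Set.Ioc (0:ℝ) t, μ (Set.Ioi y) = 0 := by
    by_contra hc
    push_neg at hc
    have : ∀ᵐ y ∂(volume : Measure ℝ), y ∉ Set.Ioc (0:ℝ) t := by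
      filter_upwards [hae] with y hy hmem
      have hy0 : 0 < y := hmem.1
      have hyr : y ∈ Set.Ioc (0:ℝ) r := ⟨hy0, hmem.2.trans (min_le_right _ _)⟩
      have := hy hyr
      rcases mul_eq_zero.mp this with h1 | h1
      · exact absurd h1 (by simp [ENNReal.ofReal_eq_zero, not_le, hy0])
      · exact hc y hmem h1
    have h0 : volume (Set.Ioc (0:ℝ) t) = 0 := by
      have h' := ae_iff.mp this
      simp only [not_not] at h'
      exact h'
    rw [Real.volume_Ioc, sub_zero, ENNReal.ofReal_eq_zero] at h0
    exact absurd h0 (not_le.mpr ht0)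
  obtain ⟨y, hy, hy0⟩ := hex
  have : μ (Set.Ioi y') ≤ μ (Set.Ioi y) := hanti (hy.2.trans (min_le_left _ _))
  rw [hy0] at this
  exact le_antisymm this (zero_le)

lemma const_int_top (S : ℝ → ℝ≥0∞) (a : ℝ) (c : ℝ≥0∞) (hc : c ≠ 0)
    (h : ∀ r : ℝ, a < r → c ≤ (S r)⁻¹) :
    ∫⁻ r in Set.Ioi a, (S r)⁻¹ = ∞ := by
  have h1 : ∫⁻ _ in Set.Ioi a, c ≤ ∫⁻ r in Set.Ioi a, (S r)⁻¹ :=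
    setLIntegral_mono' measurableSet_Ioi fun r hr => h r hr
  rw [setLIntegral_const, Real.volume_Ioi, ENNReal.mul_top hc] at h1
  exact top_le_iff.mp h1

lemma aux_a (S₁ S₂ : ℝ → ℝ≥0∞) (C : ℝ≥0∞) (hC : C ≠ ∞) (y₀ : ℝ) (hy₀ : 0 < y₀)
    (hmono₁ : Monotone S₁)
    (hcomp : ∀ r : ℝ, y₀ ≤ r → S₂ r ≤ C + S₁ r)
    (hz : (∃ r > (0:ℝ), S₁ r = 0) → ∀ r : ℝ, 0 < r → S₂ r ≤ C)
    (ρ : ℝ) (hρ : 0 < ρ)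
    (hdiv : ∫⁻ r in Set.Ioi ρ, (S₁ r)⁻¹ = ∞) :
    ∫⁻ r in Set.Ioi ρ, (S₂ r)⁻¹ = ∞ := by
  by_cases hzero : ∃ r > (0:ℝ), S₁ r = 0
  · exact const_int_top S₂ ρ C⁻¹ (ENNReal.inv_ne_zero.mpr hC)
      (fun r hr => ENNReal.inv_le_inv.mpr (hz hzero r (hρ.trans hr)))
  · push_neg at hzero
    set ρ' := max ρ y₀ with hρ'
    have hρρ' : ρ ≤ ρ' := le_max_left _ _
    by_cases hex : ∃ r, ρ' ≤ r ∧ C ≤ S₁ r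
    · obtain ⟨r₀, hr₀1, hr₀2⟩ := hex
      have hρr₀ : ρ ≤ r₀ := hρρ'.trans hr₀1
      -- tail of 1/S₁ diverges
      have hA : ∫⁻ r in Set.Ioc ρ r₀, (S₁ r)⁻¹ ≠ ∞ := by
        have hb : ∫⁻ r in Set.Ioc ρ r₀, (S₁ r)⁻¹ ≤ ∫⁻ _ in Set.Ioc ρ r₀, (S₁ ρ)⁻¹ :=
          setLIntegral_mono' measurableSet_Ioc
            (fun r hr => ENNReal.inv_le_inv.mpr (hmono₁ hr.1.le))
        rw [setLIntegral_const] at hb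
        refine ne_top_of_le_ne_top ?_ hb
        exact ENNReal.mul_ne_top (ENNReal.inv_ne_top.mpr (hzero ρ hρ))
          (by rw [Real.volume_Ioc]; exact ENNReal.ofReal_ne_top)
      have hB : ∫⁻ r in Set.Ioi r₀, (S₁ r)⁻¹ = ∞ := by
        have hu := lintegral_union (f := fun r => (S₁ r)⁻¹)
          (A := Set.Ioc ρ r₀) (B := Set.Ioi r₀) (μ := volume)
          measurableSet_Ioi (Set.Ioc_disjoint_Ioi le_rfl)
        rw [Set.Ioc_union_Ioi_eq_Ioi hρr₀, hdiv] at hu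
        by_contra hBne
        exact (ENNReal.add_ne_top.mpr ⟨hA, hBne⟩) hu.symm
      have hpt : ∀ r, r₀ < r → 2⁻¹ * (S₁ r)⁻¹ ≤ (S₂ r)⁻¹ := by
        intro r hr
        have h1 : S₂ r ≤ 2 * S₁ r := by
          calc S₂ r ≤ C + S₁ r := hcomp r ((le_max_right ρ y₀).trans (hr₀1.trans hr.le))
            _ ≤ S₁ r + S₁ r :=
              add_le_add (hr₀2.trans (hmono₁ hr.le)) le_rfl
            _ = 2 * S₁ r := (two_mul _).symm
        calc 2⁻¹ * (S₁ r)⁻¹ = (2 * S₁ r)⁻¹ :=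
            (ENNReal.mul_inv (Or.inl two_ne_zero) (Or.inl ENNReal.ofNat_ne_top)).symm
          _ ≤ (S₂ r)⁻¹ := ENNReal.inv_le_inv.mpr h1
      have hT : ∫⁻ r in Set.Ioi r₀, (S₂ r)⁻¹ = ∞ := by
        have hge : ∫⁻ r in Set.Ioi r₀, 2⁻¹ * (S₁ r)⁻¹ ≤ ∫⁻ r in Set.Ioi r₀, (S₂ r)⁻¹ :=
          setLIntegral_mono' measurableSet_Ioi fun r hr => hpt r hr
        rw [lintegral_const_mul' _ _ (by simp : (2⁻¹:ℝ≥0∞) ≠ ∞), hB,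
          ENNReal.mul_top (by simp)] at hge
        exact top_le_iff.mp hge
      have : ∫⁻ r in Set.Ioi r₀, (S₂ r)⁻¹ ≤ ∫⁻ r in Set.Ioi ρ, (S₂ r)⁻¹ :=
        lintegral_mono_set (Set.Ioi_subset_Ioi hρr₀)
      rw [hT] at this
      exact top_le_iff.mp this
    · push_neg at hex
      have hc' : ∫⁻ r in Set.Ioi ρ', (S₂ r)⁻¹ = ∞ := by
        refine const_int_top S₂ ρ' (2*C)⁻¹
          (ENNReal.inv_ne_zero.mpr (ENNReal.mul_ne_top ENNReal.ofNat_ne_top hC)) ?_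
        intro r hr
        refine ENNReal.inv_le_inv.mpr ?_
        calc S₂ r ≤ C + S₁ r := hcomp r ((le_max_right ρ y₀).trans hr.le)
          _ ≤ C + C := add_le_add le_rfl (hex r hr.le).le
          _ = 2 * C := (two_mul _).symm
      have : ∫⁻ r in Set.Ioi ρ', (S₂ r)⁻¹ ≤ ∫⁻ r in Set.Ioi ρ, (S₂ r)⁻¹ :=
        lintegral_mono_set (Set.Ioi_subset_Ioi hρρ')
      rw [hc'] at this
      exact top_le_iff.mp this

lemma aux_b (I₁ I₂ : ℝ → ℝ≥0∞) (C : ℝ≥0∞) (hC : C ≠ ∞) (y₀ : ℝ) (hy₀ : 0 < y₀)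
    (hmono₂ : Monotone I₂) (hfin₂ : ∀ r : ℝ, 0 < r → I₂ r ≠ ∞)
    (hcomp : ∀ r : ℝ, y₀ ≤ r → I₂ r ≤ C + I₁ r)
    (ρ₂ : ℝ) (hρ₂ : 0 < ρ₂) (hconv : ∫⁻ r in Set.Ioi ρ₂, (I₂ r)⁻¹ < ∞) :
    ∃ ρ₀ > (0:ℝ), ∀ ρ : ℝ, ρ₀ ≤ ρ → ∫⁻ r in Set.Ioi ρ, (I₁ r)⁻¹ < ∞ := by
  set m := max ρ₂ y₀ with hm
  have hex : ∃ r, m < r ∧ 2*C ≤ I₂ r := by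
    by_contra h
    push_neg at h
    have h1 : ∫⁻ _ in Set.Ioi m, ((2*C)⁻¹ : ℝ≥0∞) ≤ ∫⁻ r in Set.Ioi m, (I₂ r)⁻¹ :=
      setLIntegral_mono' measurableSet_Ioi fun r hr => ENNReal.inv_le_inv.mpr (h r hr).le
    rw [setLIntegral_const, Real.volume_Ioi,
      ENNReal.mul_top (ENNReal.inv_ne_zero.mpr (ENNReal.mul_ne_top ENNReal.ofNat_ne_top hC))] at h1
    have h2 : ∫⁻ r in Set.Ioi m, (I₂ r)⁻¹ ≤ ∫⁻ r in Set.Ioi ρ₂, (I₂ r)⁻¹ :=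
      lintegral_mono_set (Set.Ioi_subset_Ioi (le_max_left _ _))
    exact hconv.ne (top_le_iff.mp (h1.trans h2))
  obtain ⟨r₁, hr₁m, hr₁⟩ := hex
  have hr₁0 : 0 < r₁ := lt_of_lt_of_le hρ₂ ((le_max_left ρ₂ y₀).trans hr₁m.le)
  refine ⟨r₁, hr₁0, fun ρ hρ => ?_⟩
  have hpt : ∀ r, ρ < r → (I₁ r)⁻¹ ≤ 2 * (I₂ r)⁻¹ := by
    intro r hr
    have hr1 : r₁ ≤ r := hρ.trans hr.le
    have hy : y₀ ≤ r := (le_max_right ρ₂ y₀).trans (hr₁m.le.trans hr1)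
    have hI2 : 2*C ≤ I₂ r := hr₁.trans (hmono₂ hr1)
    have hrpos : 0 < r := hr₁0.trans_le hr1
    have hCle : C ≤ I₂ r / 2 := by
      rw [ENNReal.le_div_iff_mul_le (Or.inl two_ne_zero) (Or.inl ENNReal.ofNat_ne_top), mul_comm]
      exact hI2
    have hhalf : I₂ r / 2 ≤ I₂ r - C :=
      calc I₂ r / 2 = I₂ r - I₂ r / 2 := (ENNReal.sub_half (hfin₂ r hrpos)).symm
        _ ≤ I₂ r - C := tsub_le_tsub_left hCle _
    have hI1 : I₂ r / 2 ≤ I₁ r := hhalf.trans (tsub_le_iff_left.mpr (hcomp r hy))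
    calc (I₁ r)⁻¹ ≤ (I₂ r / 2)⁻¹ := ENNReal.inv_le_inv.mpr hI1
      _ = 2 * (I₂ r)⁻¹ := by
          rw [div_eq_mul_inv, ENNReal.mul_inv (Or.inr (by simp)) (Or.inr (by simp)),
            inv_inv, mul_comm]
  calc ∫⁻ r in Set.Ioi ρ, (I₁ r)⁻¹
      ≤ ∫⁻ r in Set.Ioi ρ, 2 * (I₂ r)⁻¹ :=
        setLIntegral_mono' measurableSet_Ioi fun r hr => hpt r hr
    _ = 2 * ∫⁻ r in Set.Ioi ρ, (I₂ r)⁻¹ := lintegral_const_mul' _ _ ENNReal.ofNat_ne_top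
    _ ≤ 2 * ∫⁻ r in Set.Ioi ρ₂, (I₂ r)⁻¹ := by
        gcongr
        exact (le_max_left ρ₂ y₀).trans (hr₁m.le.trans hρ)
    _ < ∞ := ENNReal.mul_lt_top (by simp) hconv

/-- comparison of the tail-type Chung–Fuchs conditions when `ν₁` has a
uniformly bigger tail than `ν₂`, where `N_i(x,y) = ν_i(x,(y,∞))`. -/
theorem stmt18 (ν₁ ν₂ : ℝ → MeasureTheory.Measure ℝ)
    (hν₁ : (⨆ x, ∫⁻ y in Set.Ioi (0 : ℝ), ENNReal.ofReal (min 1 (y ^ 2)) ∂(ν₁ x)) < ∞)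
    (hν₂ : (⨆ x, ∫⁻ y in Set.Ioi (0 : ℝ), ENNReal.ofReal (min 1 (y ^ 2)) ∂(ν₂ x)) < ∞)
    (y₀ : ℝ) (hy₀ : 0 < y₀)
    (htail : ∀ x : ℝ, ∀ y : ℝ, y₀ ≤ y → ν₂ x (Set.Ioi y) ≤ ν₁ x (Set.Ioi y))
    (hms₁ : Measurable fun r : ℝ =>
      ⨆ x, ∫⁻ y in Set.Ioc (0 : ℝ) r, ENNReal.ofReal y * ν₁ x (Set.Ioi y))
    (hms₂ : Measurable fun r : ℝ =>
      ⨆ x, ∫⁻ y in Set.Ioc (0 : ℝ) r, ENNReal.ofReal y * ν₂ x (Set.Ioi y))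
    (hmi₁ : Measurable fun r : ℝ =>
      ⨅ x, ∫⁻ y in Set.Ioc (0 : ℝ) r, ENNReal.ofReal y * ν₁ x (Set.Ioi y))
    (hmi₂ : Measurable fun r : ℝ =>
      ⨅ x, ∫⁻ y in Set.Ioc (0 : ℝ) r, ENNReal.ofReal y * ν₂ x (Set.Ioi y)) :
    -- (a)
    (∀ ρ > (0 : ℝ),
      (∫⁻ r in Set.Ioi ρ,
        (⨆ x, ∫⁻ y in Set.Ioc (0 : ℝ) r, ENNReal.ofReal y * ν₁ x (Set.Ioi y))⁻¹ = ∞) →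
      ∫⁻ r in Set.Ioi ρ,
        (⨆ x, ∫⁻ y in Set.Ioc (0 : ℝ) r, ENNReal.ofReal y * ν₂ x (Set.Ioi y))⁻¹ = ∞) ∧
    -- (b)
    ((∃ y₁ > (0 : ℝ),
        0 < ⨅ x, ∫⁻ y in Set.Ioi y₁, ENNReal.ofReal y * ν₁ x (Set.Ioi y)) →
      (∃ ρ > (0 : ℝ),
        ∫⁻ r in Set.Ioi ρ,
          (⨅ x, ∫⁻ y in Set.Ioc (0 : ℝ) r, ENNReal.ofReal y * ν₂ x (Set.Ioi y))⁻¹ < ∞) →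
      ∃ ρ₀ > (0 : ℝ), ∀ ρ : ℝ, ρ₀ ≤ ρ →
        ∫⁻ r in Set.Ioi ρ,
          (⨅ x, ∫⁻ y in Set.Ioc (0 : ℝ) r, ENNReal.ofReal y * ν₁ x (Set.Ioi y))⁻¹ < ∞) := by
  classical
  have hfin₁ : ∀ x : ℝ, ∫⁻ z in Set.Ioi (0:ℝ), ENNReal.ofReal (min 1 (z^2)) ∂(ν₁ x) ≠ ∞ :=
    fun x => ne_top_of_le_ne_top hν₁.ne
      (le_iSup (fun x => ∫⁻ z in Set.Ioi (0:ℝ), ENNReal.ofReal (min 1 (z^2)) ∂(ν₁ x)) x)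
  have hfin₂ : ∀ x : ℝ, ∫⁻ z in Set.Ioi (0:ℝ), ENNReal.ofReal (min 1 (z^2)) ∂(ν₂ x) ≠ ∞ :=
    fun x => ne_top_of_le_ne_top hν₂.ne
      (le_iSup (fun x => ∫⁻ z in Set.Ioi (0:ℝ), ENNReal.ofReal (min 1 (z^2)) ∂(ν₂ x)) x)
  set C : ℝ≥0∞ := ENNReal.ofReal (max 1 (y₀^2)) *
    (⨆ x, ∫⁻ z in Set.Ioi (0:ℝ), ENNReal.ofReal (min 1 (z^2)) ∂(ν₂ x)) with hCdef
  have hC : C ≠ ∞ := ENNReal.mul_ne_top ENNReal.ofReal_ne_top hν₂.ne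
  have hCbound : ∀ x : ℝ,
      ∫⁻ y in Set.Ioc (0:ℝ) y₀, ENNReal.ofReal y * ν₂ x (Set.Ioi y) ≤ C :=
    fun x => (key_bound (ν₂ x) y₀ hy₀ (hfin₂ x)).trans
      (mul_le_mul_right (le_iSup
        (fun x => ∫⁻ z in Set.Ioi (0:ℝ), ENNReal.ofReal (min 1 (z^2)) ∂(ν₂ x)) x) _)
  -- per-x comparison
  have hsplit : ∀ (x r : ℝ), y₀ ≤ r →
      ∫⁻ y in Set.Ioc (0:ℝ) r, ENNReal.ofReal y * ν₂ x (Set.Ioi y)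
        ≤ C + ∫⁻ y in Set.Ioc (0:ℝ) r, ENNReal.ofReal y * ν₁ x (Set.Ioi y) := by
    intro x r hr
    have hu : Set.Ioc (0:ℝ) y₀ ∪ Set.Ioc y₀ r = Set.Ioc 0 r :=
      Set.Ioc_union_Ioc_eq_Ioc hy₀.le hr
    calc ∫⁻ y in Set.Ioc (0:ℝ) r, ENNReal.ofReal y * ν₂ x (Set.Ioi y)
        = (∫⁻ y in Set.Ioc (0:ℝ) y₀, ENNReal.ofReal y * ν₂ x (Set.Ioi y))
          + ∫⁻ y in Set.Ioc y₀ r, ENNReal.ofReal y * ν₂ x (Set.Ioi y) := by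
          rw [← hu, lintegral_union measurableSet_Ioc (Set.Ioc_disjoint_Ioc_of_le le_rfl)]
      _ ≤ C + ∫⁻ y in Set.Ioc y₀ r, ENNReal.ofReal y * ν₂ x (Set.Ioi y) :=
          add_le_add (hCbound x) le_rfl
      _ ≤ C + ∫⁻ y in Set.Ioc y₀ r, ENNReal.ofReal y * ν₁ x (Set.Ioi y) :=
          add_le_add le_rfl (setLIntegral_mono' measurableSet_Ioc
            fun y hy => mul_le_mul_right (htail x y hy.1.le) _)
      _ ≤ C + ∫⁻ y in Set.Ioc (0:ℝ) r, ENNReal.ofReal y * ν₁ x (Set.Ioi y) :=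
          add_le_add le_rfl (lintegral_mono_set (Set.Ioc_subset_Ioc_left hy₀.le))
  constructor
  · -- part (a)
    intro ρ hρ hdiv
    refine aux_a
      (fun r => ⨆ x, ∫⁻ y in Set.Ioc (0:ℝ) r, ENNReal.ofReal y * ν₁ x (Set.Ioi y))
      (fun r => ⨆ x, ∫⁻ y in Set.Ioc (0:ℝ) r, ENNReal.ofReal y * ν₂ x (Set.Ioi y))
      C hC y₀ hy₀ ?_ ?_ ?_ ρ hρ hdiv
    · exact fun a b hab =>
        iSup_mono fun x => lintegral_mono_set (Set.Ioc_subset_Ioc_right hab)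
    · intro r hr
      exact iSup_le fun x => (hsplit x r hr).trans
        (add_le_add le_rfl (le_iSup
          (fun x => ∫⁻ y in Set.Ioc (0:ℝ) r, ENNReal.ofReal y * ν₁ x (Set.Ioi y)) x))
    · rintro ⟨rb, hrb, h0⟩ r hr
      have hzero : ∀ (x y : ℝ), 0 < y → ν₁ x (Set.Ioi y) = 0 := by
        intro x
        refine zero_prop (ν₁ x) rb hrb (le_antisymm ?_ (zero_le))
        exact h0 ▸ le_iSup
          (fun x => ∫⁻ y in Set.Ioc (0:ℝ) rb, ENNReal.ofReal y * ν₁ x (Set.Ioi y)) x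
      refine iSup_le fun x => ?_
      have hsecond : ∫⁻ y in Set.Ioc y₀ (max r y₀), ENNReal.ofReal y * ν₂ x (Set.Ioi y) = 0 := by
        have hle : ∫⁻ y in Set.Ioc y₀ (max r y₀), ENNReal.ofReal y * ν₂ x (Set.Ioi y)
            ≤ ∫⁻ _ in Set.Ioc y₀ (max r y₀), (0:ℝ≥0∞) := by
          refine setLIntegral_mono' measurableSet_Ioc fun y hy => ?_
          have h1 : ν₂ x (Set.Ioi y) ≤ ν₁ x (Set.Ioi y) := htail x y hy.1.le
          rw [hzero x y (hy₀.trans hy.1)] at h1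
          simp [le_antisymm h1 (zero_le)]
        simpa using hle
      calc ∫⁻ y in Set.Ioc (0:ℝ) r, ENNReal.ofReal y * ν₂ x (Set.Ioi y)
          ≤ ∫⁻ y in Set.Ioc (0:ℝ) (max r y₀), ENNReal.ofReal y * ν₂ x (Set.Ioi y) :=
            lintegral_mono_set (Set.Ioc_subset_Ioc_right (le_max_left _ _))
        _ = (∫⁻ y in Set.Ioc (0:ℝ) y₀, ENNReal.ofReal y * ν₂ x (Set.Ioi y))
            + ∫⁻ y in Set.Ioc y₀ (max r y₀), ENNReal.ofReal y * ν₂ x (Set.Ioi y) := by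
            rw [← Set.Ioc_union_Ioc_eq_Ioc hy₀.le (le_max_right r y₀),
              lintegral_union measurableSet_Ioc (Set.Ioc_disjoint_Ioc_of_le le_rfl)]
        _ = ∫⁻ y in Set.Ioc (0:ℝ) y₀, ENNReal.ofReal y * ν₂ x (Set.Ioi y) := by
            rw [hsecond, add_zero]
        _ ≤ C := hCbound x
  · -- part (b)
    rintro _ ⟨ρ₂, hρ₂, hconv⟩
    refine aux_b
      (fun r => ⨅ x, ∫⁻ y in Set.Ioc (0:ℝ) r, ENNReal.ofReal y * ν₁ x (Set.Ioi y))
      (fun r => ⨅ x, ∫⁻ y in Set.Ioc (0:ℝ) r, ENNReal.ofReal y * ν₂ x (Set.Ioi y))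
      C hC y₀ hy₀ ?_ ?_ ?_ ρ₂ hρ₂ hconv
    · exact fun a b hab =>
        iInf_mono fun x => lintegral_mono_set (Set.Ioc_subset_Ioc_right hab)
    · intro r hr
      have hb := (key_bound (ν₂ 0) r hr (hfin₂ 0)).trans
        (mul_le_mul_right (le_iSup
          (fun x => ∫⁻ z in Set.Ioi (0:ℝ), ENNReal.ofReal (min 1 (z^2)) ∂(ν₂ x)) 0) _)
      exact ne_top_of_le_ne_top (ENNReal.mul_ne_top ENNReal.ofReal_ne_top hν₂.ne)
        ((iInf_le
          (fun x => ∫⁻ y in Set.Ioc (0:ℝ) r, ENNReal.ofReal y * ν₂ x (Set.Ioi y)) 0).trans hb)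
    · intro r hr
      calc (⨅ x, ∫⁻ y in Set.Ioc (0:ℝ) r, ENNReal.ofReal y * ν₂ x (Set.Ioi y))
          ≤ ⨅ x, (C + ∫⁻ y in Set.Ioc (0:ℝ) r, ENNReal.ofReal y * ν₁ x (Set.Ioi y)) :=
            le_iInf fun x => (iInf_le
              (fun x => ∫⁻ y in Set.Ioc (0:ℝ) r, ENNReal.ofReal y * ν₂ x (Set.Ioi y)) x).trans
              (hsplit x r hr)
        _ = C + ⨅ x, ∫⁻ y in Set.Ioc (0:ℝ) r, ENNReal.ofReal y * ν₁ x (Set.Ioi y) :=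
            ENNReal.add_iInf.symm
end
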